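/- arXiv:1506.04289 — 2 statements merged into one kernel-verified Lean document; each statement's English description precedes it below -/
import Mathlib

section
/- For every s ∈ (0,1) and every τ ∈ (0, 2s), the integral ∫_ℝ (2 − (1+t)₊^τ − (1−t)₊^τ)/|t|^{1+2s} dt is absolutely convergent, i.e. the function t ↦ (2 − (1+t)₊^τ − (1−t)₊^τ)/|t|^{1+2s} is integrable on ℝ. -/
open MeasureTheory Set Real

lemma integrableOn_neg_of_even' {f : ℝ → ℝ} {s : Set ℝ}
    (heven : ∀ x, f (-x) = f x) (hf : IntegrableOn f s) :
    IntegrableOn f (Neg.neg ⁻¹' s) := by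
  have hmap : volume.restrict (Neg.neg ⁻¹' s) = (volume.restrict s).map Neg.neg := by
    conv_lhs => rw [← Measure.map_neg_eq_self (volume : Measure ℝ)]
    rw [measurableEmbedding_neg.restrict_map]
    congr 1
    simp [Set.preimage_preimage]
  rw [IntegrableOn, hmap, measurableEmbedding_neg.integrable_map_iff]
  have hfc : f ∘ Neg.neg = f := funext heven
  rwa [hfc]

lemma key_bound {τ : ℝ} (hτ0 : 0 < τ) (hτ2 : τ < 2) {t : ℝ} (ht : |t| ≤ 1/2) :
    |2 - (1+t)^τ - (1-t)^τ| ≤ 16 * t^2 := by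
  -- MVT for ψ x = x ^ (τ-1) on [1/2, 3/2]
  have hψ : ∀ a ∈ Icc (1/2:ℝ) (3/2), ∀ b ∈ Icc (1/2:ℝ) (3/2),
      |a ^ (τ-1) - b ^ (τ-1)| ≤ 4 * |a - b| := by
    intro a ha b hb
    have hderiv : ∀ x ∈ Icc (1/2:ℝ) (3/2),
        HasDerivWithinAt (fun x : ℝ => x ^ (τ-1)) ((τ-1) * x ^ (τ-2)) (Icc (1/2:ℝ) (3/2)) x := by
      intro x hx
      have hx0 : (0:ℝ) < x := lt_of_lt_of_le (by norm_num) hx.1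
      have := Real.hasDerivAt_rpow_const (x := x) (p := τ-1) (Or.inl hx0.ne')
      simpa [show τ - 1 - 1 = τ - 2 by ring] using this.hasDerivWithinAt
    have hbound : ∀ x ∈ Icc (1/2:ℝ) (3/2), ‖(τ-1) * x ^ (τ-2)‖ ≤ 4 := by
      intro x hx
      have hx0 : (0:ℝ) < x := lt_of_lt_of_le (by norm_num) hx.1
      have h1 : x ^ (τ-2) ≤ (1/2:ℝ) ^ (τ-2) :=
        Real.rpow_le_rpow_of_nonpos (by norm_num) hx.1 (by linarith)
      have h2 : (1/2:ℝ) ^ (τ-2) = (2:ℝ) ^ (2-τ) := by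
        rw [show (2:ℝ)-τ = -(τ-2) by ring, Real.rpow_neg (by norm_num),
          show (1/2:ℝ) = 2⁻¹ by norm_num, Real.inv_rpow (by norm_num)]
      have h3 : (2:ℝ) ^ (2-τ) ≤ (2:ℝ) ^ (2:ℝ) :=
        Real.rpow_le_rpow_of_exponent_le (by norm_num) (by linarith)
      have h4 : (2:ℝ) ^ (2:ℝ) = 4 := by
        rw [show (2:ℝ) = ((2:ℕ):ℝ) by norm_num, Real.rpow_natCast]; norm_num
      have h5 : x ^ (τ-2) ≤ 4 := by rw [h2] at h1; linarith
      have h6 : |τ - 1| ≤ 1 := by rw [abs_le]; constructor <;> linarith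
      have h7 : (0:ℝ) ≤ x ^ (τ-2) := Real.rpow_nonneg hx0.le _
      calc ‖(τ-1) * x ^ (τ-2)‖ = |τ-1| * x ^ (τ-2) := by
            rw [norm_mul, Real.norm_eq_abs, Real.norm_eq_abs, abs_of_nonneg h7]
        _ ≤ 1 * 4 := mul_le_mul h6 h5 h7 zero_le_one
        _ = 4 := by norm_num
    have := (convex_Icc (1/2:ℝ) (3/2)).norm_image_sub_le_of_norm_hasDerivWithin_le
      hderiv hbound hb ha
    simpa [Real.norm_eq_abs] using this
  -- MVT for φ u = (1+u)^τ + (1-u)^τ on uIcc 0 t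
  set φ : ℝ → ℝ := fun u => (1+u)^τ + (1-u)^τ with hφdef
  set φ' : ℝ → ℝ := fun u => τ * (1+u)^(τ-1) * 1 + τ * (1-u)^(τ-1) * (-1) with hφ'def
  have hmem : ∀ u ∈ uIcc (0:ℝ) t, |u| ≤ 1/2 := by
    intro u hu
    rcases le_total 0 t with h | h
    · rw [uIcc_of_le h] at hu
      rw [abs_le]; constructor
      · linarith [hu.1, abs_nonneg t]
      · have := hu.2; have := (abs_le.mp ht).2; linarith
    · rw [uIcc_of_ge h] at hu
      rw [abs_le]; constructor
      · have := hu.1; have := (abs_le.mp ht).1; linarith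
      · linarith [hu.2, abs_nonneg t]
  have hderivφ : ∀ u ∈ uIcc (0:ℝ) t, HasDerivWithinAt φ (φ' u) (uIcc (0:ℝ) t) u := by
    intro u hu
    have h1 : (0:ℝ) < 1 + u := by have := (abs_le.mp (hmem u hu)).1; linarith
    have h2 : (0:ℝ) < 1 - u := by have := (abs_le.mp (hmem u hu)).2; linarith
    have d1 : HasDerivAt (fun u : ℝ => (1+u)^τ) (τ * (1+u)^(τ-1) * 1) u := by
      exact (Real.hasDerivAt_rpow_const (Or.inl h1.ne')).comp u
        ((hasDerivAt_id u).const_add 1)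
    have d2 : HasDerivAt (fun u : ℝ => (1-u)^τ) (τ * (1-u)^(τ-1) * (-1)) u := by
      have := (Real.hasDerivAt_rpow_const (x := 1 - u) (p := τ) (Or.inl h2.ne')).comp u
        ((hasDerivAt_id u).const_sub 1)
      simpa [Function.comp_def] using this
    exact ((d1.add d2).hasDerivWithinAt)
  have hboundφ : ∀ u ∈ uIcc (0:ℝ) t, ‖φ' u‖ ≤ 16 * |t| := by
    intro u hu
    have hu2 : |u| ≤ 1/2 := hmem u hu
    have h1 : (1+u) ∈ Icc (1/2:ℝ) (3/2) := by
      have := abs_le.mp hu2; constructor <;> [linarith [this.1]; linarith [this.2]]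
    have h2 : (1-u) ∈ Icc (1/2:ℝ) (3/2) := by
      have := abs_le.mp hu2; constructor <;> [linarith [this.2]; linarith [this.1]]
    have hψ' := hψ (1+u) h1 (1-u) h2
    have hut : |u| ≤ |t| := by
      rcases le_total 0 t with h | h
      · rw [uIcc_of_le h] at hu; rw [abs_of_nonneg h]
        rw [abs_le]; exact ⟨by linarith [hu.1], hu.2⟩
      · rw [uIcc_of_ge h] at hu; rw [abs_of_nonpos h]
        rw [abs_le]; exact ⟨by linarith [hu.1], by linarith [hu.2]⟩
    have : ‖φ' u‖ = τ * |(1+u)^(τ-1) - (1-u)^(τ-1)| := by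
      rw [hφ'def]
      simp only [mul_one, mul_neg_one]
      rw [show τ * (1+u)^(τ-1) + -(τ * (1-u)^(τ-1)) = τ * ((1+u)^(τ-1) - (1-u)^(τ-1)) by ring]
      rw [Real.norm_eq_abs, abs_mul, abs_of_pos hτ0]
    rw [this]
    have h8 : |(1+u) - (1-u)| = 2 * |u| := by
      rw [show (1+u) - (1-u) = 2*u by ring, abs_mul]; norm_num
    calc τ * |(1+u)^(τ-1) - (1-u)^(τ-1)| ≤ τ * (4 * (2 * |u|)) := by
          rw [← h8]; exact mul_le_mul_of_nonneg_left hψ' hτ0.le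
      _ = 8 * τ * |u| := by ring
      _ ≤ 16 * |t| := by nlinarith [abs_nonneg u, abs_nonneg t]
  have hmvt := (convex_uIcc (0:ℝ) t).norm_image_sub_le_of_norm_hasDerivWithin_le
    hderivφ hboundφ (left_mem_uIcc) (right_mem_uIcc)
  have hφ0 : φ 0 = 2 := by norm_num [hφdef]
  have : ‖φ t - φ 0‖ ≤ 16 * |t| * ‖t - 0‖ := hmvt
  rw [hφ0, sub_zero, Real.norm_eq_abs, Real.norm_eq_abs] at this
  have habs : |2 - (1+t)^τ - (1-t)^τ| = |φ t - 2| := by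
    rw [hφdef]; rw [abs_sub_comm]; congr 1; ring
  rw [habs]
  calc |φ t - 2| ≤ 16 * |t| * |t| := this
    _ = 16 * t^2 := by rw [mul_assoc, ← abs_mul, ← sq, abs_sq]

theorem stmt_0 (s τ : ℝ) (hs : s ∈ Set.Ioo (0:ℝ) 1) (hτ : τ ∈ Set.Ioo (0:ℝ) (2*s)) :
    Integrable (fun t : ℝ =>
      (2 - (max (1 + t) 0) ^ τ - (max (1 - t) 0) ^ τ) / |t| ^ (1 + 2*s)) := by
  obtain ⟨hs0, hs1⟩ := hs
  obtain ⟨hτ0, hτ2s⟩ := hτ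
  set f : ℝ → ℝ :=
    fun t => (2 - (max (1 + t) 0) ^ τ - (max (1 - t) 0) ^ τ) / |t| ^ (1 + 2*s) with hf
  have hτ2 : τ < 2 := by linarith
  have hcontN : Continuous fun t : ℝ => 2 - (max (1 + t) 0) ^ τ - (max (1 - t) 0) ^ τ := by
    have c1 : Continuous fun t : ℝ => (max (1 + t) 0) ^ τ :=
      ((continuous_const.add continuous_id).max continuous_const).rpow_const
        fun x => Or.inr hτ0.le
    have c2 : Continuous fun t : ℝ => (max (1 - t) 0) ^ τ :=
      ((continuous_const.sub continuous_id).max continuous_const).rpow_const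
        fun x => Or.inr hτ0.le
    exact (continuous_const.sub c1).sub c2
  have hcontD : Continuous fun t : ℝ => |t| ^ (1 + 2*s) :=
    continuous_abs.rpow_const fun x => Or.inr (by positivity)
  have hmeas : AEStronglyMeasurable f volume :=
    (hcontN.measurable.div hcontD.measurable).aestronglyMeasurable
  have heven : ∀ x : ℝ, f (-x) = f x := by
    intro x
    simp only [hf]
    rw [show (1 : ℝ) + -x = 1 - x by ring, show (1:ℝ) - -x = 1 + x by ring, abs_neg]
    ring
  -- right tail
  have htail : IntegrableOn f (Ioi (1/2:ℝ)) := by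
    have hg : IntegrableOn
        (fun t : ℝ => 3 * t ^ (-(1+2*s)) + 3^τ * t ^ (τ - (1+2*s))) (Ioi (1/2:ℝ)) := by
      have g1 := (integrableOn_Ioi_rpow_of_lt (a := -(1+2*s)) (by linarith)
        (c := 1/2) (by norm_num)).const_mul 3
      have g2 := (integrableOn_Ioi_rpow_of_lt (a := τ - (1+2*s)) (by linarith)
        (c := 1/2) (by norm_num)).const_mul (3^τ)
      exact g1.add g2
    have hpt : ∀ t ∈ Ioi (1/2:ℝ), ‖f t‖ ≤ 3 * t ^ (-(1+2*s)) + 3^τ * t ^ (τ - (1+2*s)) := by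
      intro t ht
      have ht' : (1/2:ℝ) < t := ht
      have ht0 : (0:ℝ) < t := by linarith
      have hden : (0:ℝ) < t ^ (1+2*s) := Real.rpow_pos_of_pos ht0 _
      have ha : max (1+t) 0 = 1 + t := max_eq_left (by linarith)
      have hA : (1+t) ^ τ ≤ 3^τ * t^τ := by
        rw [← Real.mul_rpow (by norm_num) ht0.le]
        exact Real.rpow_le_rpow (by linarith) (by linarith) hτ0.le
      have hAnn : (0:ℝ) ≤ (1+t)^τ := Real.rpow_nonneg (by linarith) _
      have hB : (max (1-t) 0) ^ τ ≤ 1 :=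
        Real.rpow_le_one (le_max_right _ _) (max_le (by linarith) (by norm_num)) hτ0.le
      have hBnn : (0:ℝ) ≤ (max (1-t) 0)^τ := Real.rpow_nonneg (le_max_right _ _) _
      have hCnn : (0:ℝ) ≤ 3^τ * t^τ := by positivity
      have hnum : |2 - (max (1+t) 0)^τ - (max (1-t) 0)^τ| ≤ 3 + 3^τ * t^τ := by
        rw [ha, abs_le]
        constructor
        · linarith
        · linarith
      have habs : |t| = t := abs_of_pos ht0
      simp only [hf, Real.norm_eq_abs]
      rw [habs, abs_div, abs_of_pos hden]
      calc |2 - (max (1+t) 0)^τ - (max (1-t) 0)^τ| / t^(1+2*s)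
          ≤ (3 + 3^τ * t^τ) / t^(1+2*s) := by gcongr
        _ = 3 * t ^ (-(1+2*s)) + 3^τ * t ^ (τ - (1+2*s)) := by
            rw [add_div, Real.rpow_sub ht0, Real.rpow_neg ht0.le]
            ring
    exact hg.mono' hmeas.restrict
      ((ae_restrict_iff' measurableSet_Ioi).mpr (ae_of_all _ hpt))
  -- left tail by symmetry
  have hpre1 : Neg.neg ⁻¹' (Ioi (1/2:ℝ)) = Iio (-(1/2:ℝ)) := by
    ext x
    simp only [Set.mem_preimage, Set.mem_Ioi, Set.mem_Iio]
    constructor <;> intro h <;> linarith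
  have hleft : IntegrableOn f (Iio (-(1/2):ℝ)) := by
    have := integrableOn_neg_of_even' heven htail
    rwa [hpre1] at this
  -- middle
  have hmidR : IntegrableOn (fun t : ℝ => 16 * |t| ^ (1-2*s)) (Icc (0:ℝ) (1/2)) := by
    have h1 : IntegrableOn (fun t : ℝ => t ^ (1-2*s)) (Icc (0:ℝ) (1/2)) := by
      rw [← intervalIntegrable_iff_integrableOn_Icc_of_le (by norm_num)]
      exact intervalIntegral.intervalIntegrable_rpow' (by linarith)
    have h2 := h1.const_mul 16
    exact IntegrableOn.congr_fun h2 (fun x hx => by rw [abs_of_nonneg hx.1]) measurableSet_Icc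
  have hpre2 : Neg.neg ⁻¹' (Icc (0:ℝ) (1/2)) = Icc (-(1/2):ℝ) 0 := by
    ext x
    simp only [Set.mem_preimage, Set.mem_Icc]
    constructor <;> intro h <;> exact ⟨by linarith [h.1, h.2], by linarith [h.1, h.2]⟩
  have hmidL : IntegrableOn (fun t : ℝ => 16 * |t| ^ (1-2*s)) (Icc (-(1/2):ℝ) 0) := by
    have := integrableOn_neg_of_even' (f := fun t : ℝ => 16 * |t| ^ (1-2*s))
      (fun x => by simp) hmidR
    rwa [hpre2] at this
  have hmidg : IntegrableOn (fun t : ℝ => 16 * |t| ^ (1-2*s)) (Icc (-(1/2):ℝ) (1/2)) := by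
    rw [← Set.Icc_union_Icc_eq_Icc (by norm_num : (-(1/2):ℝ) ≤ 0) (by norm_num : (0:ℝ) ≤ 1/2)]
    exact integrableOn_union.mpr ⟨hmidL, hmidR⟩
  have hmid : IntegrableOn f (Icc (-(1/2):ℝ) (1/2)) := by
    have hpt : ∀ t ∈ Icc (-(1/2):ℝ) (1/2), ‖f t‖ ≤ 16 * |t| ^ (1-2*s) := by
      intro t ht
      have ht2 : |t| ≤ 1/2 := abs_le.mpr ⟨ht.1, ht.2⟩
      have ha : max (1+t) 0 = 1 + t := max_eq_left (by linarith [ht.1])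
      have hb : max (1-t) 0 = 1 - t := max_eq_left (by linarith [ht.2])
      have hnum : |2 - (max (1+t) 0)^τ - (max (1-t) 0)^τ| ≤ 16 * t^2 := by
        rw [ha, hb]; exact key_bound hτ0 hτ2 ht2
      rcases eq_or_ne t 0 with rfl | ht0
      · simp only [hf, Real.norm_eq_abs]
        have : |(0:ℝ)| = 0 := abs_zero
        rw [this]
        have h0 : ((2:ℝ) - (max (1+(0:ℝ)) 0)^τ - (max (1-(0:ℝ)) 0)^τ) = 0 := by
          norm_num
        rw [h0, zero_div, abs_zero]
        positivity
      · have habs0 : (0:ℝ) < |t| := abs_pos.mpr ht0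
        have hden : (0:ℝ) < |t| ^ (1+2*s) := Real.rpow_pos_of_pos habs0 _
        simp only [hf, Real.norm_eq_abs]
        rw [abs_div, abs_of_pos hden]
        calc |2 - (max (1+t) 0)^τ - (max (1-t) 0)^τ| / |t|^(1+2*s)
            ≤ (16 * t^2) / |t|^(1+2*s) := by gcongr
          _ = 16 * |t| ^ (1-2*s) := by
              rw [show t^2 = |t|^((2:ℕ):ℝ) by rw [Real.rpow_natCast]; rw [sq_abs],
                mul_div_assoc, ← Real.rpow_sub habs0]
              congr 1
              ring_nf
    exact hmidg.mono' hmeas.restrict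
      ((ae_restrict_iff' measurableSet_Icc).mpr (ae_of_all _ hpt))
  -- combine
  rw [← integrableOn_univ]
  have hcover : (Set.univ : Set ℝ) = Iio (-(1/2:ℝ)) ∪ (Icc (-(1/2):ℝ) (1/2) ∪ Ioi (1/2:ℝ)) := by
    ext x
    simp only [Set.mem_univ, Set.mem_union, Set.mem_Iio, Set.mem_Icc, Set.mem_Ioi, true_iff]
    by_cases h1 : x < -(1/2:ℝ)
    · exact Or.inl h1
    · by_cases h2 : x ≤ (1/2:ℝ)
      · exact Or.inr (Or.inl ⟨by linarith, h2⟩)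
      · exact Or.inr (Or.inr (by linarith))
  rw [hcover]
  exact integrableOn_union.mpr ⟨hleft, integrableOn_union.mpr ⟨hmid, htail⟩⟩
end

section
/- Define F(τ) = ∫_ℝ (2 − (1+t)₊^τ − (1−t)₊^τ)/|t|^{1+2s} dt for τ ∈ (0, 2s), where s ∈ (0,1). Then F is strictly concave on (0, 2s). -/
open MeasureTheory Real Set
open scoped ENNReal

-- MVT step 1
lemma aux_pow_sub_one (τ : ℝ) (hτ0 : 0 < τ) (hτ2 : τ < 2) :
    ∀ x ∈ Icc (1/2:ℝ) (3/2), |x ^ (τ-1) - 1| ≤ 4 * |x - 1| := by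
  intro x hx
  have key := Convex.norm_image_sub_le_of_norm_hasDerivWithin_le
    (f := fun y : ℝ => y ^ (τ-1)) (f' := fun y : ℝ => (τ-1) * y ^ (τ-2))
    (s := Icc (1/2:ℝ) (3/2)) (C := 4)
    (fun y hy => by
      have hy0 : y ≠ 0 := by simp only [mem_Icc] at hy; intro h; rw [h] at hy; norm_num at hy
      have := (Real.hasDerivAt_rpow_const (x := y) (p := τ-1) (Or.inl hy0)).hasDerivWithinAt
        (s := Icc (1/2:ℝ) (3/2))
      rw [show τ-1-1 = τ-2 by ring] at this
      exact this)
    (fun y hy => by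
      simp only [mem_Icc] at hy
      have hy0 : (0:ℝ) < y := by linarith
      have h1 : y ^ (τ-2) ≤ (1/2:ℝ) ^ (τ-2) :=
        Real.rpow_le_rpow_of_nonpos (by norm_num) hy.1 (by linarith)
      have h2 : (1/2:ℝ) ^ (τ-2) = (2:ℝ) ^ (2-τ) := by
        rw [show (1/2:ℝ) = 2⁻¹ by norm_num, Real.inv_rpow (by norm_num),
          ← Real.rpow_neg (by norm_num)]
        congr 1
        ring
      have h3 : (2:ℝ) ^ (2-τ) ≤ (2:ℝ) ^ (2:ℝ) :=
        Real.rpow_le_rpow_of_exponent_le (by norm_num) (by linarith)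
      have h4 : (2:ℝ) ^ (2:ℝ) = 4 := by
        rw [show (2:ℝ) = ((2:ℕ):ℝ) by norm_num, Real.rpow_natCast]; norm_num
      rw [Real.norm_eq_abs, abs_mul, abs_of_nonneg (Real.rpow_nonneg hy0.le _)]
      have habs : |τ - 1| ≤ 1 := by rw [abs_le]; constructor <;> linarith
      nlinarith [Real.rpow_nonneg hy0.le (τ-2)]
      )
    (convex_Icc _ _) (show (1:ℝ) ∈ Icc (1/2:ℝ) (3/2) by norm_num) hx
  simpa [Real.one_rpow] using key

lemma aux_taylor (τ : ℝ) (hτ0 : 0 < τ) (hτ2 : τ < 2) :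
    ∀ x ∈ Icc (1/2:ℝ) (3/2), |x ^ τ - 1 - τ*(x-1)| ≤ 8 * (x-1)^2 := by
  intro x hx
  have h1 : (1:ℝ) ∈ Icc (1/2:ℝ) (3/2) := by norm_num
  have hsub : uIcc (1:ℝ) x ⊆ Icc (1/2:ℝ) (3/2) := uIcc_subset_Icc h1 hx
  have key := Convex.norm_image_sub_le_of_norm_hasDerivWithin_le
    (f := fun y : ℝ => y ^ τ - 1 - τ*(y-1)) (f' := fun y : ℝ => τ * y ^ (τ-1) - τ)
    (s := uIcc (1:ℝ) x) (C := 8 * |x - 1|)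
    (fun y hy => by
      have hy' := hsub hy
      simp only [mem_Icc] at hy'
      have hy0 : y ≠ 0 := by intro h; rw [h] at hy'; norm_num at hy'
      have hd : HasDerivAt (fun y : ℝ => y ^ τ - 1 - τ*(y-1)) (τ * y ^ (τ-1) - τ) y := by
        have hA := Real.hasDerivAt_rpow_const (x := y) (p := τ) (Or.inl hy0)
        have hB : HasDerivAt (fun y : ℝ => τ*(y-1)) τ y := by
          simpa using ((hasDerivAt_id y).sub_const 1).const_mul τ
        exact (hA.sub_const 1).sub hB
      exact hd.hasDerivWithinAt)
    (fun y hy => by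
      have hy' := hsub hy
      have hbd := aux_pow_sub_one τ hτ0 hτ2 y hy'
      have hyx : |y - 1| ≤ |x - 1| := by
        rcases le_total (1:ℝ) x with h | h
        · rw [uIcc_of_le h] at hy; simp only [mem_Icc] at hy
          rw [abs_of_nonneg (by linarith), abs_of_nonneg (by linarith)]; linarith
        · rw [uIcc_of_ge h] at hy; simp only [mem_Icc] at hy
          rw [abs_of_nonpos (by linarith), abs_of_nonpos (by linarith)]; linarith
      have : ‖τ * y ^ (τ-1) - τ‖ = τ * |y ^ (τ-1) - 1| := by
        rw [Real.norm_eq_abs, show τ * y ^ (τ-1) - τ = τ * (y ^ (τ-1) - 1) by ring,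
          abs_mul, abs_of_nonneg hτ0.le]
      rw [this]
      nlinarith [abs_nonneg (y - 1), abs_nonneg (x - 1)])
    (convex_uIcc _ _) (left_mem_uIcc) (right_mem_uIcc) 
  simp only [Real.one_rpow] at key
  rw [Real.norm_eq_abs, Real.norm_eq_abs] at key
  calc |x ^ τ - 1 - τ*(x-1)| = |x ^ τ - 1 - τ * (x - 1) - (1 - 1 - τ * (1 - 1))| := by ring_nf
    _ ≤ 8 * |x-1| * |x - 1| := key
    _ = 8 * (x-1)^2 := by rw [mul_assoc, abs_mul_abs_self]; ring

lemma aux_num_bound (τ : ℝ) (hτ0 : 0 < τ) (hτ2 : τ < 2) (t : ℝ) (ht : |t| ≤ 1/2) :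
    |2 - (1+t) ^ τ - (1-t) ^ τ| ≤ 16 * t^2 := by
  rw [abs_le] at ht
  have h1 := aux_taylor τ hτ0 hτ2 (1+t) (by simp only [mem_Icc]; constructor <;> linarith)
  have h2 := aux_taylor τ hτ0 hτ2 (1-t) (by simp only [mem_Icc]; constructor <;> linarith)
  rw [show (1:ℝ)+t-1 = t by ring] at h1
  rw [show (1:ℝ)-t-1 = -t by ring] at h2
  have e : 2 - (1+t) ^ τ - (1-t) ^ τ
      = -((1+t) ^ τ - 1 - τ*t) + -((1-t) ^ τ - 1 - τ*(-t)) := by ring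
  rw [e]
  calc |(-((1+t) ^ τ - 1 - τ*t)) + -((1-t) ^ τ - 1 - τ*(-t))|
      ≤ |(-((1+t) ^ τ - 1 - τ*t))| + |(-((1-t) ^ τ - 1 - τ*(-t)))| := abs_add_le _ _
    _ = |(1+t) ^ τ - 1 - τ*t| + |(1-t) ^ τ - 1 - τ*(-t)| := by rw [abs_neg, abs_neg]
    _ ≤ 8 * t^2 + 8 * (-t)^2 := add_le_add h1 h2
    _ = 16 * t^2 := by ring

lemma aux_comb {A p q a b : ℝ} (hA : 0 ≤ A) (hp : 0 < p) (hq : 0 < q)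
    (ha : 0 < a) (hb : 0 < b) (hab : a + b = 1) :
    A ^ (a*p + b*q) ≤ a * A ^ p + b * A ^ q := by
  rcases hA.eq_or_lt with h | h
  · rw [← h, Real.zero_rpow hp.ne', Real.zero_rpow hq.ne',
      Real.zero_rpow (by positivity : a*p+b*q ≠ 0)]
    simp
  · rw [Real.rpow_def_of_pos h, Real.rpow_def_of_pos h, Real.rpow_def_of_pos h]
    have := convexOn_exp.2 (mem_univ (Real.log A * p)) (mem_univ (Real.log A * q))
      ha.le hb.le hab
    simp only [smul_eq_mul] at this
    calc Real.exp (Real.log A * (a*p + b*q))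
        = Real.exp (a * (Real.log A * p) + b * (Real.log A * q)) := by ring_nf
      _ ≤ a * Real.exp (Real.log A * p) + b * Real.exp (Real.log A * q) := this

lemma aux_comb_strict {A p q a b : ℝ} (hA : 1 < A) (hpq : p ≠ q)
    (ha : 0 < a) (hb : 0 < b) (hab : a + b = 1) :
    A ^ (a*p + b*q) < a * A ^ p + b * A ^ q := by
  have h : (0:ℝ) < A := by linarith
  have hlog : Real.log A ≠ 0 := ne_of_gt (Real.log_pos hA)
  rw [Real.rpow_def_of_pos h, Real.rpow_def_of_pos h, Real.rpow_def_of_pos h]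
  have hne : Real.log A * p ≠ Real.log A * q := by
    intro hc; exact hpq (mul_left_cancel₀ hlog hc)
  have := strictConvexOn_exp.2 (mem_univ (Real.log A * p)) (mem_univ (Real.log A * q))
    hne ha hb hab
  simp only [smul_eq_mul] at this
  calc Real.exp (Real.log A * (a*p + b*q))
      = Real.exp (a * (Real.log A * p) + b * (Real.log A * q)) := by ring_nf
    _ < a * Real.exp (Real.log A * p) + b * Real.exp (Real.log A * q) := this

lemma aux_integrable (s τ : ℝ) (hs0 : 0 < s) (hs1 : s < 1) (hτ0 : 0 < τ) (hτs : τ < 2*s) :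
    Integrable (fun t : ℝ =>
      (2 - (max (1 + t) 0) ^ τ - (max (1 - t) 0) ^ τ) / |t| ^ (1 + 2*s)) := by
  set g : ℝ → ℝ := fun t =>
    (2 - (max (1 + t) 0) ^ τ - (max (1 - t) 0) ^ τ) / |t| ^ (1 + 2*s) with hgdef
  have hτ2 : τ < 2 := by linarith
  have hmeas : Measurable g := by
    apply Measurable.div
    · fun_prop
    · fun_prop
  have heven : ∀ t, g (-t) = g t := by
    intro t
    simp only [hgdef]
    rw [abs_neg, show 1 + -t = 1 - t by ring, show 1 - -t = 1 + t by ring]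
    ring
  have hIoi : IntegrableOn g (Ioi (0:ℝ)) := by
    rw [show Ioi (0:ℝ) = Ioc 0 (1/2) ∪ Ioi (1/2) from (Ioc_union_Ioi_eq_Ioi (by norm_num)).symm,
      integrableOn_union]
    constructor
    · have hmaj : IntegrableOn (fun t : ℝ => 16 * t ^ (1-2*s)) (Ioc (0:ℝ) (1/2)) := by
        have h0 : IntegrableOn (fun t : ℝ => t ^ (1-2*s)) (Ioo (0:ℝ) (1/2)) :=
          (intervalIntegral.integrableOn_Ioo_rpow_iff (by norm_num)).mpr (by linarith)
        exact (h0.congr_set_ae Ioo_ae_eq_Ioc.symm).const_mul 16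
      apply Integrable.mono' hmaj hmeas.aestronglyMeasurable.restrict
      filter_upwards [ae_restrict_mem measurableSet_Ioc] with t ht
      obtain ⟨ht0, ht12⟩ := ht
      have habs : |t| = t := abs_of_pos ht0
      have hmax1 : max (1+t) 0 = 1+t := max_eq_left (by linarith)
      have hmax2 : max (1-t) 0 = 1-t := max_eq_left (by linarith)
      have hb := aux_num_bound τ hτ0 hτ2 t (by rw [habs]; linarith)
      simp only [hgdef]
      rw [Real.norm_eq_abs, abs_div, hmax1, hmax2, habs,
        abs_of_nonneg (Real.rpow_nonneg ht0.le _)]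
      have hden : (0:ℝ) < t ^ (1+2*s) := Real.rpow_pos_of_pos ht0 _
      rw [div_le_iff₀ hden]
      have e : t ^ (1-2*s) * t ^ (1+2*s) = t^(2:ℕ) := by
        rw [← Real.rpow_add ht0, ← Real.rpow_natCast t 2]
        norm_num
      calc |2 - (1+t)^τ - (1-t)^τ| ≤ 16 * t^2 := hb
        _ = 16 * t ^ (1-2*s) * t ^ (1+2*s) := by rw [mul_assoc, e]
    · set M : ℝ → ℝ := fun t => 2 * t ^ (-(1+2*s)) + (2 * 3 ^ τ) * t ^ (τ-(1+2*s)) with hMdef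
      have hM : IntegrableOn M (Ioi (1/2:ℝ)) := by
        apply Integrable.add
        · exact ((integrableOn_Ioi_rpow_iff (by norm_num)).mpr (by linarith)).const_mul 2
        · exact ((integrableOn_Ioi_rpow_iff (by norm_num)).mpr (by linarith)).const_mul _
      apply Integrable.mono' hM hmeas.aestronglyMeasurable.restrict
      filter_upwards [ae_restrict_mem measurableSet_Ioi] with t ht
      have ht0 : (0:ℝ) < t := by simp only [mem_Ioi] at ht; linarith
      simp only [mem_Ioi] at ht
      have habs : |t| = t := abs_of_pos ht0
      have hA0 : (0:ℝ) ≤ max (1+t) 0 := le_max_right _ _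
      have hB0 : (0:ℝ) ≤ max (1-t) 0 := le_max_right _ _
      have hAτ : (max (1+t) 0) ^ τ ≤ (3*t) ^ τ :=
        Real.rpow_le_rpow hA0 (max_le (by linarith) (by linarith)) hτ0.le
      have hBτ : (max (1-t) 0) ^ τ ≤ (3*t) ^ τ :=
        Real.rpow_le_rpow hB0 (max_le (by linarith) (by linarith)) hτ0.le
      have h3 : (3*t) ^ τ = 3 ^ τ * t ^ τ := Real.mul_rpow (by norm_num) ht0.le
      have hnum : |2 - (max (1+t) 0) ^ τ - (max (1-t) 0) ^ τ| ≤ 2 + 2 * 3 ^ τ * t ^ τ := by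
        rw [abs_le]
        constructor
        · nlinarith [Real.rpow_nonneg hA0 τ, Real.rpow_nonneg hB0 τ]
        · nlinarith [Real.rpow_nonneg hA0 τ, Real.rpow_nonneg hB0 τ]
      simp only [hgdef]
      rw [Real.norm_eq_abs, abs_div, habs, abs_of_nonneg (Real.rpow_nonneg ht0.le _)]
      have hden : (0:ℝ) < t ^ (1+2*s) := Real.rpow_pos_of_pos ht0 _
      rw [div_le_iff₀ hden]
      have e1 : t ^ (-(1+2*s)) * t ^ (1+2*s) = 1 := by
        rw [← Real.rpow_add ht0, show -(1+2*s)+(1+2*s) = 0 by ring, Real.rpow_zero]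
      have e2 : t ^ (τ-(1+2*s)) * t ^ (1+2*s) = t ^ τ := by
        rw [← Real.rpow_add ht0]; ring_nf
      calc |2 - (max (1+t) 0) ^ τ - (max (1-t) 0) ^ τ| ≤ 2 + 2 * 3 ^ τ * t ^ τ := hnum
        _ = M t * t ^ (1+2*s) := by
            simp only [hMdef, add_mul]
            rw [mul_assoc (2 * 3 ^ τ) _ _, e2, mul_assoc 2 (t ^ (-(1+2*s))) _, e1]
            ring
  have hIio : IntegrableOn g (Iio (0:ℝ)) := by
    rw [← (Measure.measurePreserving_neg (volume : Measure ℝ)).integrableOn_comp_preimage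
        (Homeomorph.neg ℝ).measurableEmbedding]
    simp only [neg_preimage, neg_Iio, neg_zero]
    have hcomp : g ∘ Neg.neg = g := funext fun t => heven t
    rw [hcomp]
    exact hIoi
  rw [← integrableOn_univ, ← Iio_union_Ici (a := (0:ℝ)), integrableOn_union]
  exact ⟨hIio, Iff.mpr integrableOn_Ici_iff_integrableOn_Ioi hIoi⟩

theorem stmt_2 (s : ℝ) (hs : s ∈ Set.Ioo (0:ℝ) 1) :
    StrictConcaveOn ℝ (Set.Ioo 0 (2*s)) (fun τ : ℝ =>
      ∫ t : ℝ, (2 - (max (1 + t) 0) ^ τ - (max (1 - t) 0) ^ τ) / |t| ^ (1 + 2*s)) := by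
  obtain ⟨hs0, hs1⟩ := hs
  set g : ℝ → ℝ → ℝ := fun τ t =>
    (2 - (max (1 + t) 0) ^ τ - (max (1 - t) 0) ^ τ) / |t| ^ (1 + 2*s) with hgdef
  constructor
  · exact convex_Ioo 0 (2*s)
  · intro x hx y hy hxy a b ha hb hab
    have hτm : a • x + b • y ∈ Ioo (0:ℝ) (2*s) := (convex_Ioo 0 (2*s)) hx hy ha.le hb.le hab
    rw [smul_eq_mul, smul_eq_mul] at hτm
    obtain ⟨hx0, hx2⟩ := hx
    obtain ⟨hy0, hy2⟩ := hy
    have Ix : Integrable (g x) := aux_integrable s x hs0 hs1 hx0 hx2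
    have Iy : Integrable (g y) := aux_integrable s y hs0 hs1 hy0 hy2
    have Iτ : Integrable (g (a*x + b*y)) := aux_integrable s _ hs0 hs1 hτm.1 hτm.2
    have Iax : Integrable (fun t => a * g x t + b * g y t) :=
      (Ix.const_mul a).add (Iy.const_mul b)
    set φ : ℝ → ℝ := fun t => g (a*x+b*y) t - (a * g x t + b * g y t) with hφdef
    have hφint : Integrable φ := Iτ.sub Iax
    have hφeq : ∀ t, φ t =
        ((a * (max (1+t) 0) ^ x + b * (max (1+t) 0) ^ y - (max (1+t) 0) ^ (a*x+b*y))
        + (a * (max (1-t) 0) ^ x + b * (max (1-t) 0) ^ y - (max (1-t) 0) ^ (a*x+b*y)))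
          / |t| ^ (1+2*s) := by
      intro t
      simp only [hφdef, hgdef]
      rw [← mul_div_assoc, ← mul_div_assoc, ← add_div, ← sub_div]
      congr 1
      linear_combination (-2:ℝ) * hab
    have hφ0 : ∀ t, 0 ≤ φ t := by
      intro t
      rw [hφeq t]
      apply div_nonneg _ (Real.rpow_nonneg (abs_nonneg t) _)
      have h1 := aux_comb (le_max_right (1+t) 0) hx0 hy0 ha hb hab
      have h2 := aux_comb (le_max_right (1-t) 0) hx0 hy0 ha hb hab
      linarith
    have hφpos : ∀ t ∈ Ioo (0:ℝ) 1, 0 < φ t := by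
      intro t ht
      obtain ⟨ht0, ht1⟩ := ht
      rw [hφeq t]
      apply div_pos
      · have hmax1 : max (1+t) 0 = 1+t := max_eq_left (by linarith)
        have h1 : (max (1+t) 0) ^ (a*x+b*y) < a * (max (1+t) 0) ^ x + b * (max (1+t) 0) ^ y := by
          rw [hmax1]
          exact aux_comb_strict (by linarith) hxy ha hb hab
        have h2 := aux_comb (le_max_right (1-t) 0) hx0 hy0 ha hb hab
        linarith
      · exact Real.rpow_pos_of_pos (abs_pos.mpr (ne_of_gt ht0)) _
    have hpos : 0 < ∫ t, φ t := by
      rw [integral_pos_iff_support_of_nonneg hφ0 hφint]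
      have hsub : Ioo (0:ℝ) 1 ⊆ Function.support φ := fun t ht => (hφpos t ht).ne'
      calc (0:ℝ≥0∞) < volume (Ioo (0:ℝ) 1) := by rw [Real.volume_Ioo]; norm_num
        _ ≤ volume (Function.support φ) := measure_mono hsub
    have hint : ∫ t, φ t = (∫ t, g (a*x+b*y) t) - (a * (∫ t, g x t) + b * ∫ t, g y t) := by
      simp only [hφdef]
      rw [integral_sub Iτ Iax,
        integral_add (Ix.const_mul a) (Iy.const_mul b),
        integral_const_mul, integral_const_mul]
    rw [hint] at hpos
    have hgoal : a * (∫ t, g x t) + b * (∫ t, g y t) < ∫ t, g (a*x+b*y) t := by linarith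
    simp only [smul_eq_mul]
    simp only [hgdef] at hgoal
    exact hgoal
end
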